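/- Let G be a connected simple graph with uniformly bounded vertex degrees, L its normalized combinatorial Laplacian acting on L²(V(G)), S ⊂ V(G), and Λ > 0 such that ‖φ‖ ≤ Λ‖Lφ‖ for all φ ∈ L²(G) supported in S. If ω < 1/Λ and f, g are two functions in the Paley–Wiener space PW_ω(G) (i.e., in the range of the spectral projection of L onto [0, ω]) that agree on V(G)∖S, then f = g on all of V(G). -/

import Mathlib

open scoped ComplexConjugate

/-- The quadratic form of the normalized Laplacian is nonnegative (all degrees positive). -/
lemma stmt5_quad_nonneg {V : Type*} (G : SimpleGraph V) [∀ v, Fintype (G.neighborSet v)]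
    (hdeg : ∀ v, 0 < G.degree v) (D : ℕ) (hD : ∀ v, G.degree v ≤ D)
    (L : lp (fun _ : V => ℂ) 2 →L[ℂ] lp (fun _ : V => ℂ) 2)
    (hL : ∀ (f : lp (fun _ : V => ℂ) 2) (v : V),
      L f v = (1 / (Real.sqrt (G.degree v) : ℂ)) *
        ∑ u ∈ G.neighborFinset v,
          (f v / (Real.sqrt (G.degree v) : ℂ) - f u / (Real.sqrt (G.degree u) : ℂ)))
    (f : lp (fun _ : V => ℂ) 2) :
    0 ≤ RCLike.re (inner ℂ f (L f) : ℂ) := by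
  classical
  set d : V → ℝ := fun v => Real.sqrt (G.degree v) with hd_def
  have hd1 : ∀ v, 1 ≤ d v := fun v => by
    rw [hd_def, show (1:ℝ) = Real.sqrt 1 from (Real.sqrt_one).symm]
    exact Real.sqrt_le_sqrt (by exact_mod_cast hdeg v)
  set F : V → ℂ := fun v => f v / (d v : ℂ) with hF_def
  have hFle : ∀ v, ‖F v‖ ≤ ‖f v‖ := fun v => by
    rw [hF_def]
    simp only [norm_div, Complex.norm_real, Real.norm_eq_abs,
      abs_of_nonneg (le_trans zero_le_one (hd1 v))]
    exact div_le_self (norm_nonneg _) (hd1 v)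
  have hsumf : Summable fun v => ‖f v‖ ^ 2 := by
    have := (lp.memℓp f).summable (p := 2) (by norm_num)
    simpa [Real.rpow_natCast] using this
  have hs : Summable fun v => ‖F v‖ ^ 2 :=
    hsumf.of_nonneg_of_le (fun v => sq_nonneg _)
      (fun v => pow_le_pow_left₀ (norm_nonneg _) (hFle v) 2)
  set P := (v : V) × ↥(G.neighborSet v) with hP_def
  have hadj : ∀ p : P, G.Adj p.1 p.2.1 := fun p => p.2.2
  set e : P ≃ P :=
    { toFun := fun p => ⟨p.2.1, ⟨p.1, (hadj p).symm⟩⟩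
      invFun := fun p => ⟨p.2.1, ⟨p.1, (hadj p).symm⟩⟩
      left_inv := fun p => rfl
      right_inv := fun p => rfl } with he_def
  have hq : Summable fun p : P => ‖F p.1‖ ^ 2 := by
    rw [summable_sigma_of_nonneg (fun p => sq_nonneg _)]
    refine ⟨fun v => Summable.of_finite,
      Summable.of_nonneg_of_le (fun v => tsum_nonneg fun _ => sq_nonneg _)
        (fun v => ?_) (hs.mul_left (D : ℝ))⟩
    rw [tsum_fintype]
    show (∑ _b : ↥(G.neighborSet v), ‖F v‖ ^ 2 : ℝ) ≤ _
    rw [Finset.sum_const, Finset.card_univ, SimpleGraph.card_neighborSet_eq_degree,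
      nsmul_eq_mul]
    have : (G.degree v : ℝ) ≤ (D : ℝ) := by exact_mod_cast hD v
    exact mul_le_mul_of_nonneg_right this (sq_nonneg _)
  have hq2 : Summable fun p : P => ‖F p.2.1‖ ^ 2 := by
    have := e.summable_iff.mpr hq
    simpa [he_def, Function.comp_def] using this
  set t : P → ℂ := fun p => (starRingEnd ℂ) (F p.1) * (F p.1 - F p.2.1) with ht_def
  have ht : Summable t := by
    apply Summable.of_norm
    refine Summable.of_nonneg_of_le (fun p => norm_nonneg _) (fun p => ?_)
      ((hq.mul_left 2).add hq2)
    calc ‖t p‖ = ‖F p.1‖ * ‖F p.1 - F p.2.1‖ := by rw [ht_def, norm_mul, RCLike.norm_conj]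
      _ ≤ ‖F p.1‖ * (‖F p.1‖ + ‖F p.2.1‖) :=
          mul_le_mul_of_nonneg_left (norm_sub_le _ _) (norm_nonneg _)
      _ ≤ 2 * ‖F p.1‖ ^ 2 + ‖F p.2.1‖ ^ 2 := by
          nlinarith [sq_nonneg (‖F p.1‖ - ‖F p.2.1‖), norm_nonneg (F p.1), norm_nonneg (F p.2.1)]
  have hte : Summable (t ∘ e) := e.summable_iff.mpr ht
  -- inner product equals the tsum over P
  have hinner : (inner ℂ f (L f) : ℂ) = ∑' p : P, t p := by
    rw [lp.inner_eq_tsum, Summable.tsum_sigma ht]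
    apply tsum_congr
    intro v
    rw [tsum_fintype]
    have hc : (starRingEnd ℂ) (f v) * (1 / (d v : ℂ)) = (starRingEnd ℂ) (F v) := by
      rw [hF_def, map_div₀, Complex.conj_ofReal, mul_one_div]
    calc (inner ℂ (f v) (L f v) : ℂ)
        = (starRingEnd ℂ) (f v) * (L f v) := by rw [RCLike.inner_apply, mul_comm]
      _ = ((starRingEnd ℂ) (f v) * (1 / (d v : ℂ))) *
            ∑ u ∈ G.neighborFinset v, (F v - F u) := by rw [hL f v, mul_assoc]
      _ = ∑ u ∈ G.neighborFinset v, (starRingEnd ℂ) (F v) * (F v - F u) := by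
            rw [hc, Finset.mul_sum]
      _ = ∑ b : ↥(G.neighborSet v), (starRingEnd ℂ) (F v) * (F v - F (b : V)) := by
            rw [SimpleGraph.neighborFinset_def, ← Finset.sum_set_coe]
      _ = ∑ b : ↥(G.neighborSet v), t ⟨v, b⟩ := rfl
  -- real part manipulation
  have hre : Summable fun p : P => RCLike.re (t p) :=
    (RCLike.hasSum_re ℂ ht.hasSum).summable
  have hree : Summable fun p : P => RCLike.re (t (e p)) :=
    (RCLike.hasSum_re ℂ hte.hasSum).summable
  have key : RCLike.re (inner ℂ f (L f) : ℂ) + RCLike.re (inner ℂ f (L f) : ℂ)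
      = ∑' p : P, ‖F p.1 - F p.2.1‖ ^ 2 := by
    have h1 : RCLike.re (inner ℂ f (L f) : ℂ) = ∑' p : P, RCLike.re (t p) := by
      rw [hinner, RCLike.re_tsum _ ht]
    have h2 : RCLike.re (inner ℂ f (L f) : ℂ) = ∑' p : P, RCLike.re (t (e p)) := by
      rw [h1, ← e.tsum_eq fun p => RCLike.re (t p)]
    calc RCLike.re (inner ℂ f (L f) : ℂ) + RCLike.re (inner ℂ f (L f) : ℂ)
        = (∑' p : P, RCLike.re (t p)) + ∑' p : P, RCLike.re (t (e p)) := by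
          rw [← h1, ← h2]
      _ = ∑' p : P, (RCLike.re (t p) + RCLike.re (t (e p))) := (Summable.tsum_add hre hree).symm
      _ = ∑' p : P, ‖F p.1 - F p.2.1‖ ^ 2 := by
          apply tsum_congr
          intro p
          have hpt : t p + t (e p)
              = (starRingEnd ℂ) (F p.1 - F p.2.1) * (F p.1 - F p.2.1) := by
            rw [ht_def]
            show (starRingEnd ℂ) (F p.1) * (F p.1 - F p.2.1)
                + (starRingEnd ℂ) (F p.2.1) * (F p.2.1 - F p.1) = _
            rw [map_sub]
            ring
          rw [← map_add, hpt, RCLike.conj_mul]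
          simp [← Complex.ofReal_pow]
  have hnn : 0 ≤ ∑' p : P, ‖F p.1 - F p.2.1‖ ^ 2 := tsum_nonneg fun p => sq_nonneg _
  linarith [key, hnn]

/-- The normalized Laplacian of a connected graph has nonnegative real spectrum. -/
lemma stmt5_spec_nonneg {V : Type*} (G : SimpleGraph V) [∀ v, Fintype (G.neighborSet v)]
    (hconn : G.Connected) (D : ℕ) (hD : ∀ v, G.degree v ≤ D)
    (L : lp (fun _ : V => ℂ) 2 →L[ℂ] lp (fun _ : V => ℂ) 2) (hsa : IsSelfAdjoint L)
    (hL : ∀ (f : lp (fun _ : V => ℂ) 2) (v : V),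
      L f v = (1 / (Real.sqrt (G.degree v) : ℂ)) *
        ∑ u ∈ G.neighborFinset v,
          (f v / (Real.sqrt (G.degree v) : ℂ) - f u / (Real.sqrt (G.degree u) : ℂ)))
    : ∀ x ∈ spectrum ℝ L, 0 ≤ x := by
  suffices hpos : L.IsPositive by
    exact SpectrumRestricts.nnreal_iff.mp hpos.spectrumRestricts
  by_cases hdeg : ∀ v, 0 < G.degree v
  · refine ⟨hsa.isSymmetric, fun x => ?_⟩
    rw [ContinuousLinearMap.reApplyInnerSelf_apply]
    rw [inner_re_symm]
    exact stmt5_quad_nonneg G hdeg D hD L hL x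
  · -- some vertex has degree zero; by connectivity the graph is a single vertex and `L = 0`
    push_neg at hdeg
    obtain ⟨v, hv⟩ := hdeg
    have hv0 : G.degree v = 0 := Nat.le_zero.mp hv
    have hsingle : ∀ w : V, v = w := by
      intro w
      obtain ⟨p⟩ := hconn.preconnected v w
      cases p with
      | nil => rfl
      | cons h q =>
          exact absurd ((SimpleGraph.degree_pos_iff_exists_adj (G := G) (v := v)).mpr ⟨_, h⟩)
            (by omega)
    have hdeg0 : ∀ w, G.degree w = 0 := fun w => (hsingle w) ▸ hv0
    have hL0 : L = 0 := by
      refine ContinuousLinearMap.ext fun f => ?_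
      refine lp.ext (funext fun w => ?_)
      have hN : G.neighborFinset w = ∅ := by
        rw [← Finset.card_eq_zero, SimpleGraph.card_neighborFinset_eq_degree]
        exact hdeg0 w
      rw [hL f w, hN]
      simp
    rw [hL0]
    exact ContinuousLinearMap.isPositive_zero

/-- The Paley–Wiener space `PW_ω`: range of the spectral projection of `L` onto `[0, ω]`,
i.e. vectors annihilated by `g(L)` for every continuous `g` vanishing on `(-∞, ω]`. -/
def specSubspace {H : Type*} [NormedAddCommGroup H] [InnerProductSpace ℂ H] [CompleteSpace H]
    (A : H →L[ℂ] H) (ω : ℝ) : Set H :=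
  {f | ∀ g : ℝ → ℝ, Continuous g → (∀ x ≤ ω, g x = 0) → cfc g A f = 0}

set_option maxHeartbeats 1000000 in
/-- On a connected simple graph `G` with uniformly bounded degrees, with
normalized Laplacian `L` on `L²(V(G))`, if `S ⊂ V(G)` is a `Λ`-set and `ω < 1/Λ`, then
any two functions of the Paley–Wiener space `PW_ω(G)` agreeing on `V(G) ∖ S` coincide. -/
theorem stmt_5 {V : Type*} (G : SimpleGraph V) [∀ v, Fintype (G.neighborSet v)]
    (hconn : G.Connected) (D : ℕ) (hD : ∀ v, G.degree v ≤ D)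
    (L : lp (fun _ : V => ℂ) 2 →L[ℂ] lp (fun _ : V => ℂ) 2) (hsa : IsSelfAdjoint L)
    (hL : ∀ (f : lp (fun _ : V => ℂ) 2) (v : V),
      L f v = (1 / (Real.sqrt (G.degree v) : ℂ)) *
        ∑ u ∈ G.neighborFinset v,
          (f v / (Real.sqrt (G.degree v) : ℂ) - f u / (Real.sqrt (G.degree u) : ℂ)))
    (S : Set V) (Λ : ℝ) (hΛ : 0 < Λ)
    (hPoin : ∀ φ : lp (fun _ : V => ℂ) 2, (∀ v ∉ S, φ v = 0) → ‖φ‖ ≤ Λ * ‖L φ‖)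
    (ω : ℝ) (hω : ω < 1 / Λ)
    (f g : lp (fun _ : V => ℂ) 2)
    (hf : f ∈ specSubspace L ω) (hg : g ∈ specSubspace L ω)
    (hfg : ∀ v ∉ S, f v = g v) : f = g := by
  letI : Algebra ℝ (lp (fun _ : V => ℂ) 2 →L[ℂ] lp (fun _ : V => ℂ) 2) := Algebra.complexToReal
  have hspec : ∀ x ∈ spectrum ℝ L, 0 ≤ x := stmt5_spec_nonneg G hconn D hD L hsa hL
  set φ : lp (fun _ : V => ℂ) 2 := f - g with hφ_def
  have hφS : ∀ v ∉ S, φ v = 0 := fun v hv => by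
    have : φ v = f v - g v := by
      rw [hφ_def]
      exact congrFun (lp.coeFn_sub f g) v
    rw [this, hfg v hv, sub_self]
  have hφspec : ∀ g0 : ℝ → ℝ, Continuous g0 → (∀ x ≤ ω, g0 x = 0) → cfc g0 L φ = 0 := by
    intro g0 hcont hvan
    rw [hφ_def, map_sub, hf g0 hcont hvan, hg g0 hcont hvan, sub_self]
  suffices hφ0 : φ = 0 by
    rw [hφ_def] at hφ0
    exact sub_eq_zero.mp hφ0
  by_cases hω0 : 0 ≤ ω
  · -- `L φ = m(L) φ` with `m x = min x ω`, hence `‖L φ‖ ≤ ω ‖φ‖`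
    have hcont1 : Continuous fun x : ℝ => min x ω := continuous_id.min continuous_const
    have hcont2 : Continuous fun x : ℝ => x - min x ω :=
      continuous_id.sub hcont1
    have h1 : cfc (fun x : ℝ => x - min x ω) L φ = 0 :=
      hφspec _ hcont2 fun x hx => by rw [min_eq_left hx, sub_self]
    have h2 : L φ = cfc (fun x : ℝ => min x ω) L φ := by
      have hsplit : (fun x : ℝ => x) = fun x : ℝ => min x ω + (x - min x ω) :=
        funext fun x => by ring
      calc L φ = cfc (fun x : ℝ => x) L φ := by rw [cfc_id' ℝ L hsa]
        _ = (cfc (fun x : ℝ => min x ω) L + cfc (fun x : ℝ => x - min x ω) L) φ := by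
            rw [← cfc_add L _ _ hcont1.continuousOn hcont2.continuousOn, ← hsplit]
        _ = cfc (fun x : ℝ => min x ω) L φ := by
            rw [ContinuousLinearMap.add_apply, h1, add_zero]
    have h3 : ‖cfc (fun x : ℝ => min x ω) L‖ ≤ ω :=
      norm_cfc_le hω0 fun x hx => by
        rw [Real.norm_eq_abs, abs_of_nonneg (le_min (hspec x hx) hω0)]
        exact min_le_right _ _
    have h4 : ‖φ‖ ≤ (Λ * ω) * ‖φ‖ := by
      calc ‖φ‖ ≤ Λ * ‖L φ‖ := hPoin φ hφS
        _ ≤ Λ * (ω * ‖φ‖) := by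
            refine mul_le_mul_of_nonneg_left ?_ hΛ.le
            rw [h2]
            calc ‖cfc (fun x : ℝ => min x ω) L φ‖
                ≤ ‖cfc (fun x : ℝ => min x ω) L‖ * ‖φ‖ :=
                  (cfc (fun x : ℝ => min x ω) L).le_opNorm φ
              _ ≤ ω * ‖φ‖ := mul_le_mul_of_nonneg_right h3 (norm_nonneg _)
        _ = (Λ * ω) * ‖φ‖ := by ring
    have hΛω : Λ * ω < 1 := by
      have := (lt_div_iff₀' hΛ).mp hω
      linarith
    by_contra hne
    have hz : ‖φ‖ ≠ 0 := fun h => hne (lp.norm_eq_zero_iff.mp h)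
    have hpos : 0 < ‖φ‖ := lt_of_le_of_ne (norm_nonneg _) (Ne.symm hz)
    have := mul_lt_mul_of_pos_right hΛω hpos
    linarith
  · -- `ω < 0`: the spectral subspace is trivial
    push_neg at hω0
    have hcont : Continuous fun x : ℝ => min (max (x - ω) 0) (-ω) :=
      ((continuous_id.sub continuous_const).max continuous_const).min continuous_const
    have hvan : ∀ x ≤ ω, min (max (x - ω) 0) (-ω) = 0 := fun x hx => by
      rw [max_eq_right (by linarith), min_eq_left (by linarith)]
    have h0 : cfc (fun x : ℝ => min (max (x - ω) 0) (-ω)) L φ = 0 := hφspec _ hcont hvan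
    have hcongr : cfc (fun x : ℝ => min (max (x - ω) 0) (-ω)) L
        = cfc (fun _ : ℝ => -ω) L := by
      apply cfc_congr
      intro x hx
      have hx0 : 0 ≤ x := hspec x hx
      show min (max (x - ω) 0) (-ω) = -ω
      have h1 : max (x - ω) 0 = x - ω := max_eq_left (by linarith)
      rw [h1, min_eq_right (by linarith)]
    rw [hcongr, cfc_const (-ω) L hsa] at h0
    have : (-ω) • φ = 0 := by
      rw [Algebra.algebraMap_eq_smul_one] at h0
      exact h0
    have hωne : (-ω) ≠ 0 := by linarith
    exact (smul_eq_zero.mp this).resolve_left hωne
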